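/- Let I and J be monomial ideals of R = K[x_1,…,x_n], let y be a variable of R and α ≥ 1 an integer such that y ∉ supp(J) and I + (y^α) = J + (y^α), and let M be a monomial of R not divisible by y. Then (I : M) + (y^α) = (J : M) + (y^α). -/

import Mathlib

open MvPolynomial

/-- `I` is an ideal of `K[x_1,…,x_n]` generated by monomials. -/
def IsMonomialIdeal {K : Type*} [Field K] {n : ℕ}
    (I : Ideal (MvPolynomial (Fin n) K)) : Prop :=
  ∃ S : Set (Fin n →₀ ℕ),
    I = Ideal.span ((fun e => MvPolynomial.monomial e (1 : K)) '' S)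

/-- `I` is a monomial ideal admitting a monomial generating set in which no
monomial is divisible by a variable `x_i` with `i ∈ A`; equivalently, `I` is a
monomial ideal whose support is disjoint from `A`. -/
def MonomialIdealAvoiding {K : Type*} [Field K] {n : ℕ} (A : Set (Fin n))
    (I : Ideal (MvPolynomial (Fin n) K)) : Prop :=
  ∃ S : Set (Fin n →₀ ℕ), (∀ e ∈ S, ∀ i ∈ A, e i = 0) ∧
    I = Ideal.span ((fun e => MvPolynomial.monomial e (1 : K)) '' S)

private lemma colon_span_monomials {K : Type*} [Field K] {n : ℕ}
    (S : Set (Fin n →₀ ℕ)) (e : Fin n →₀ ℕ) :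
    (Ideal.span ((fun s => MvPolynomial.monomial s (1 : K)) '' S)).colon
        (Ideal.span {(MvPolynomial.monomial e (1 : K))})
      = Ideal.span ((fun s => MvPolynomial.monomial s (1 : K)) '' ((· - e) '' S)) := by
  classical
  ext f
  rw [Ideal.mem_colon_span_singleton, mem_ideal_span_monomial_image,
    mem_ideal_span_monomial_image]
  have hsupp : (f * MvPolynomial.monomial e (1 : K)).support
      = f.support.map (addRightEmbedding e) := by
    rw [← single_eq_monomial]
    exact AddMonoidAlgebra.support_coeff_mul_single f 1 (fun y => by simp) e
  rw [hsupp]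
  constructor
  · intro H d hd
    obtain ⟨s, hs, hle⟩ := H (d + e) (Finset.mem_map.mpr ⟨d, hd, rfl⟩)
    exact ⟨s - e, Set.mem_image_of_mem _ hs, tsub_le_iff_right.mpr hle⟩
  · intro H d hd
    simp only [Finset.mem_map, addRightEmbedding, Function.Embedding.coeFn_mk] at hd
    obtain ⟨a, ha, rfl⟩ := hd
    obtain ⟨u, hu, hle⟩ := H a ha
    obtain ⟨s, hs, rfl⟩ := hu
    exact ⟨s, hs, le_trans (le_tsub_add) (add_le_add_left hle e)⟩

private lemma span_monomials_le {K : Type*} [Field K] {n : ℕ}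
    {A B : Set (Fin n →₀ ℕ)} (h : ∀ a ∈ A, ∃ b ∈ B, b ≤ a) :
    Ideal.span ((fun s => MvPolynomial.monomial s (1 : K)) '' A)
      ≤ Ideal.span ((fun s => MvPolynomial.monomial s (1 : K)) '' B) := by
  classical
  rw [Ideal.span_le]
  rintro p ⟨a, ha, rfl⟩
  rw [SetLike.mem_coe, mem_ideal_span_monomial_image]
  intro d hd
  rw [support_monomial, if_neg one_ne_zero, Finset.mem_singleton] at hd
  subst hd
  exact h _ ha

private lemma mono_mem_span {K : Type*} [Field K] {n : ℕ}
    {A : Set (Fin n →₀ ℕ)} {a : Fin n →₀ ℕ}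
    (h : MvPolynomial.monomial a (1 : K) ∈
      Ideal.span ((fun s => MvPolynomial.monomial s (1 : K)) '' A)) :
    ∃ b ∈ A, b ≤ a := by
  classical
  rw [mem_ideal_span_monomial_image] at h
  exact h a (by rw [support_monomial, if_neg one_ne_zero]; exact Finset.mem_singleton_self a)

/-- Let `I, J` be monomial ideals of `R = K[x_1,…,x_n]`,
`y` a variable and `α ≥ 1` such that `y ∉ supp J` and
`I + (y^α) = J + (y^α)`, and let `M` be a monomial (with exponent vector `e`,
`e y = 0`) not divisible by `y`.  Then
`(I : M) + (y^α) = (J : M) + (y^α)`. -/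

theorem colon_add_pow_var_eq
    {K : Type*} [Field K] {n : ℕ}
    (I J : Ideal (MvPolynomial (Fin n) K))
    (hI : IsMonomialIdeal I) (hJmon : IsMonomialIdeal J)
    (y : Fin n) (α : ℕ) (hα : 1 ≤ α)
    (hJ : MonomialIdealAvoiding {y} J)
    (h : I + Ideal.span {(X y : MvPolynomial (Fin n) K) ^ α}
        = J + Ideal.span {(X y : MvPolynomial (Fin n) K) ^ α})
    (e : Fin n →₀ ℕ) (he : e y = 0) :
    I.colon (Ideal.span {(MvPolynomial.monomial e (1 : K))})
        + Ideal.span {(X y : MvPolynomial (Fin n) K) ^ α}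
      = J.colon (Ideal.span {(MvPolynomial.monomial e (1 : K))})
        + Ideal.span {(X y : MvPolynomial (Fin n) K) ^ α} := by
  obtain ⟨SI, rfl⟩ := hI
  obtain ⟨SJ, hSJ, rfl⟩ := hJ
  clear hJmon
  set v : Fin n →₀ ℕ := Finsupp.single y α with hv
  have hXpow : (X y : MvPolynomial (Fin n) K) ^ α = MvPolynomial.monomial v 1 :=
    X_pow_eq_monomial
  have hspanv : Ideal.span {(X y : MvPolynomial (Fin n) K) ^ α}
      = Ideal.span ((fun s => MvPolynomial.monomial s (1 : K)) '' {v}) := by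
    rw [hXpow, Set.image_singleton]
  rw [colon_span_monomials, colon_span_monomials]
  simp only [hspanv, Ideal.add_eq_sup, ← Ideal.span_union, ← Set.image_union] at h ⊢
  -- generator-level facts from h
  have hIJ : ∀ s ∈ SI, ∃ t ∈ SJ ∪ {v}, t ≤ s := by
    intro s hs
    have hm : MvPolynomial.monomial s (1 : K) ∈
        Ideal.span ((fun s => MvPolynomial.monomial s (1 : K)) '' (SI ∪ {v})) :=
      Ideal.subset_span (Set.mem_image_of_mem _ (Set.mem_union_left _ hs))
    rw [h] at hm
    exact mono_mem_span hm
  have hJI : ∀ s ∈ SJ, ∃ t ∈ SI ∪ {v}, t ≤ s := by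
    intro s hs
    have hm : MvPolynomial.monomial s (1 : K) ∈
        Ideal.span ((fun s => MvPolynomial.monomial s (1 : K)) '' (SJ ∪ {v})) :=
      Ideal.subset_span (Set.mem_image_of_mem _ (Set.mem_union_left _ hs))
    rw [← h] at hm
    exact mono_mem_span hm
  apply le_antisymm <;> apply span_monomials_le
  · rintro a (⟨s, hs, rfl⟩ | ha)
    · obtain ⟨t, (ht | ht), hle⟩ := hIJ s hs
      · exact ⟨t - e, Set.mem_union_left _ ⟨t, ht, rfl⟩, tsub_le_tsub_right hle e⟩
      · refine ⟨v, Set.mem_union_right _ rfl, ?_⟩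
        rw [Set.mem_singleton_iff] at ht
        subst ht
        rw [hv, Finsupp.single_le_iff] at hle ⊢
        simpa [he] using hle
    · exact ⟨v, Set.mem_union_right _ rfl, le_of_eq ha.symm⟩
  · rintro a (⟨s, hs, rfl⟩ | ha)
    · obtain ⟨t, (ht | ht), hle⟩ := hJI s hs
      · exact ⟨t - e, Set.mem_union_left _ ⟨t, ht, rfl⟩, tsub_le_tsub_right hle e⟩
      · exfalso
        rw [Set.mem_singleton_iff] at ht
        subst ht
        rw [hv, Finsupp.single_le_iff, hSJ s hs y rfl] at hle
        omega
    · exact ⟨v, Set.mem_union_right _ rfl, le_of_eq ha.symm⟩
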